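/- Let λ_k = ∏_{i=0}^{k-1}(1-α_i) where the sequence (α_k) satisfies α_k ∈ (0, 1/n], γ_{k+1} = n²α_k², γ_{k+1} ≥ (1-α_k)γ_k, and γ_0 ∈ (0,1]. Then λ_k ≤ (2n / (2n + k√γ_0))² for all k ≥ 0. -/
import Mathlib


/-- Sublinear bound λ_k ≤ (2n/(2n + k√γ₀))². -/
theorem stmt_5 (n : ℕ) (hn : 1 ≤ n) (α γ : ℕ → ℝ)
    (hγ0pos : 0 < γ 0) (hγ0le : γ 0 ≤ 1)
    (hαpos : ∀ k, 0 < α k) (hαle : ∀ k, α k ≤ 1 / n)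
    (hγeq : ∀ k, γ (k + 1) = (n : ℝ) ^ 2 * (α k) ^ 2)
    (hγge : ∀ k, (1 - α k) * γ k ≤ γ (k + 1)) :
    ∀ k : ℕ, ∏ i ∈ Finset.range k, (1 - α i) ≤
      (2 * n / (2 * n + k * Real.sqrt (γ 0))) ^ 2 := by
  have hn' : (1:ℝ) ≤ n := by exact_mod_cast hn
  have hnpos : (0:ℝ) < n := lt_of_lt_of_le one_pos hn'
  set s := Real.sqrt (γ 0) with hs
  have hspos : 0 < s := Real.sqrt_pos.mpr hγ0pos
  have hfac : ∀ i, 0 ≤ 1 - α i := by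
    intro i
    have : α i ≤ 1 := (hαle i).trans (div_le_one_of_le₀ hn' hnpos.le)
    linarith
  have hPnn : ∀ m, 0 ≤ ∏ i ∈ Finset.range m, (1 - α i) := fun m =>
    Finset.prod_nonneg fun i _ => hfac i
  have hγlam : ∀ m, γ 0 * ∏ i ∈ Finset.range m, (1 - α i) ≤ γ m := by
    intro m
    induction m with
    | zero => simp
    | succ m ih =>
      rw [Finset.prod_range_succ]
      calc γ 0 * ((∏ i ∈ Finset.range m, (1 - α i)) * (1 - α m))
          = (1 - α m) * (γ 0 * ∏ i ∈ Finset.range m, (1 - α i)) := by ring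
        _ ≤ (1 - α m) * γ m := mul_le_mul_of_nonneg_left ih (hfac m)
        _ ≤ γ (m + 1) := hγge m
  have main : ∀ m : ℕ,
      (2 * n + m * s) * Real.sqrt (∏ i ∈ Finset.range m, (1 - α i)) ≤ 2 * n := by
    intro m
    induction m with
    | zero => simp [Real.sqrt_one]
    | succ m ih =>
      set P := ∏ i ∈ Finset.range m, (1 - α i) with hP
      have hQ : ∏ i ∈ Finset.range (m+1), (1 - α i) = P * (1 - α m) :=
        Finset.prod_range_succ _ _
      rw [hQ]
      set Q := P * (1 - α m) with hQdef
      have hQnn : 0 ≤ Q := mul_nonneg (hPnn m) (hfac m)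
      rcases eq_or_lt_of_le hQnn with hQ0 | hQpos
      · rw [← hQ0, Real.sqrt_zero, mul_zero]
        positivity
      · have hPpos : 0 < P := by
          nlinarith [hQpos, hPnn m, hαpos m, hfac m]
        have hα1 : α m ≤ 1 := (hαle m).trans (div_le_one_of_le₀ hn' hnpos.le)
        have hsqQ : Real.sqrt Q = Real.sqrt P * Real.sqrt (1 - α m) :=
          Real.sqrt_mul (hPnn m) _
        have hC : Real.sqrt (1 - α m) ≤ 1 - α m / 2 := by
          have h1 : 1 - α m ≤ (1 - α m / 2) ^ 2 := by nlinarith [sq_nonneg (α m)]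
          calc Real.sqrt (1 - α m) ≤ Real.sqrt ((1 - α m / 2) ^ 2) :=
                Real.sqrt_le_sqrt h1
            _ = 1 - α m / 2 := Real.sqrt_sq (by linarith)
        have hA : s * Real.sqrt Q ≤ n * α m := by
          have h1 : γ 0 * Q ≤ γ (m + 1) := by
            have := hγlam (m + 1)
            rwa [Finset.prod_range_succ] at this
          have h2 : (s * Real.sqrt Q) ^ 2 = γ 0 * Q := by
            rw [mul_pow, hs, Real.sq_sqrt hγ0pos.le, Real.sq_sqrt hQnn]
          have h3 : (s * Real.sqrt Q) ^ 2 ≤ (n * α m) ^ 2 := by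
            rw [h2, mul_pow]
            calc γ 0 * Q ≤ γ (m + 1) := h1
              _ = (n:ℝ) ^ 2 * α m ^ 2 := hγeq m
          calc s * Real.sqrt Q = Real.sqrt ((s * Real.sqrt Q) ^ 2) :=
                (Real.sqrt_sq (by positivity)).symm
            _ ≤ Real.sqrt ((n * α m) ^ 2) := Real.sqrt_le_sqrt h3
            _ = n * α m := Real.sqrt_sq (mul_nonneg hnpos.le (hαpos m).le)
        have hnn1 : 0 ≤ (2 * n + m * s) * Real.sqrt P := by positivity
        have key1 : (2 * n + m * s) * Real.sqrt Q ≤ 2 * n * (1 - α m / 2) := by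
          rw [hsqQ]
          calc (2 * n + m * s) * (Real.sqrt P * Real.sqrt (1 - α m))
              = ((2 * n + m * s) * Real.sqrt P) * Real.sqrt (1 - α m) := by ring
            _ ≤ ((2 * n + m * s) * Real.sqrt P) * (1 - α m / 2) :=
                mul_le_mul_of_nonneg_left hC hnn1
            _ ≤ 2 * n * (1 - α m / 2) :=
                mul_le_mul_of_nonneg_right ih (by linarith)
        push_cast
        nlinarith [key1, hA, Real.sqrt_nonneg Q, hspos]
  intro k
  have h := main k
  have hden : 0 < 2 * n + k * s := by positivity
  have hsq : Real.sqrt (∏ i ∈ Finset.range k, (1 - α i)) ≤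
      2 * n / (2 * n + k * s) := by
    rw [le_div_iff₀ hden, mul_comm]
    exact h
  calc ∏ i ∈ Finset.range k, (1 - α i)
      = Real.sqrt (∏ i ∈ Finset.range k, (1 - α i)) ^ 2 :=
        (Real.sq_sqrt (hPnn k)).symm
    _ ≤ (2 * n / (2 * n + k * s)) ^ 2 :=
        pow_le_pow_left₀ (Real.sqrt_nonneg _) hsq 2
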